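/- Every free measure on ℕ which is both a P-measure and an almost Q-measure is a Q-measure. -/

import Mathlib

open Filter

/-- A finitely additive probability measure defined on all subsets of `ℕ`. -/
def IsMeasure (μ : Set ℕ → ℝ) : Prop :=
  (∀ A : Set ℕ, 0 ≤ μ A ∧ μ A ≤ 1) ∧ μ Set.univ = 1 ∧
    ∀ A B : Set ℕ, Disjoint A B → μ (A ∪ B) = μ A + μ B

/-- A measure is free if it vanishes on finite sets. -/
def IsFree (μ : Set ℕ → ℝ) : Prop := ∀ A : Set ℕ, A.Finite → μ A = 0

/-- A function is finite-to-one if all fibers are finite. -/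
def FinToOne (f : ℕ → ℕ) : Prop := ∀ n : ℕ, (f ⁻¹' {n}).Finite

/-- Rudin-Blass reducibility: `ν ≤_RB μ` via a finite-to-one map. -/
def RBLe (ν μ : Set ℕ → ℝ) : Prop :=
  ∃ f : ℕ → ℕ, FinToOne f ∧ ∀ A : Set ℕ, μ (f ⁻¹' A) = ν A

/-- Rudin-Keisler reducibility: `ν ≤_RK μ`. -/
def RKLe (ν μ : Set ℕ → ℝ) : Prop :=
  ∃ f : ℕ → ℕ, ∀ A : Set ℕ, μ (f ⁻¹' A) = ν A

/-- A measure is shift invariant if `μ(A + 1) = μ(A)`. -/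
def ShiftInvariant (μ : Set ℕ → ℝ) : Prop :=
  ∀ A : Set ℕ, μ ((fun n => n + 1) '' A) = μ A

/-- A measure extends the asymptotic density. -/
def ExtendsDensity (μ : Set ℕ → ℝ) : Prop :=
  ∀ (A : Set ℕ) (d : ℝ),
    Tendsto (fun n : ℕ => ((A ∩ Set.Iio n).ncard : ℝ) / n) atTop (nhds d) → μ A = d

/-- A partition of `ℕ` indexed by `ℕ`. -/
def IsPartition (A : ℕ → Set ℕ) : Prop :=
  Pairwise (Function.onFun Disjoint A) ∧ (⋃ n, A n) = Set.univ

/-- A selector of a partition: meets each piece in at most one point. -/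
def IsSelector (S : Set ℕ) (A : ℕ → Set ℕ) : Prop :=
  ∀ n : ℕ, (S ∩ A n).Subsingleton

/-- A Q-measure: each partition into finite sets has a selector of full measure. -/
def IsQMeasure (μ : Set ℕ → ℝ) : Prop :=
  ∀ A : ℕ → Set ℕ, IsPartition A → (∀ n, (A n).Finite) →
    ∃ S : Set ℕ, IsSelector S A ∧ μ S = 1

/-- A Q⁺-measure: each partition into finite sets has a selector of positive measure. -/
def IsQPlusMeasure (μ : Set ℕ → ℝ) : Prop :=
  ∀ A : ℕ → Set ℕ, IsPartition A → (∀ n, (A n).Finite) →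
    ∃ S : Set ℕ, IsSelector S A ∧ 0 < μ S

/-- A P-measure: each partition has a pseudo-selector of the largest possible measure. -/
def IsPMeasure (μ : Set ℕ → ℝ) : Prop :=
  ∀ A : ℕ → Set ℕ, IsPartition A →
    ∃ S : Set ℕ, (∀ n, (S ∩ A n).Finite) ∧ μ S = 1 - ∑' n, μ (A n)

/-- A selective measure: each partition has a selector of the largest possible measure. -/
def IsSelectiveMeasure (μ : Set ℕ → ℝ) : Prop :=
  ∀ A : ℕ → Set ℕ, IsPartition A →
    ∃ S : Set ℕ, IsSelector S A ∧ μ S = 1 - ∑' n, μ (A n)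

/-- A non-atomic measure: finite partitions into pieces of arbitrarily small measure. -/
def NonAtomic (μ : Set ℕ → ℝ) : Prop :=
  ∀ ε : ℝ, 0 < ε → ∃ (N : ℕ) (P : Fin N → Set ℕ),
    Pairwise (Function.onFun Disjoint P) ∧ (⋃ i, P i) = Set.univ ∧ ∀ i, μ (P i) < ε

/-- The continuum hypothesis: `2 ^ ℵ₀ = ℵ₁`. -/
def CH : Prop := (2 : Cardinal.{0}) ^ Cardinal.aleph0.{0} = Cardinal.aleph.{0} 1


/-- An almost Q-measure: every partition into finite sets admits selectors of measure
arbitrarily close to 1. -/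
def IsAlmostQMeasure (μ : Set ℕ → ℝ) : Prop :=
  ∀ A : ℕ → Set ℕ, IsPartition A → (∀ n, (A n).Finite) →
    ∀ δ : ℝ, δ < 1 → ∃ S : Set ℕ, IsSelector S A ∧ δ < μ S

section PQAux

variable {μ : Set ℕ → ℝ}

private lemma pq_nonneg (hμ : IsMeasure μ) (A : Set ℕ) : 0 ≤ μ A := (hμ.1 A).1

private lemma pq_add (hμ : IsMeasure μ) {A B : Set ℕ} (h : Disjoint A B) :
    μ (A ∪ B) = μ A + μ B := hμ.2.2 A B h

private lemma pq_empty (hμ : IsMeasure μ) : μ ∅ = 0 := by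
  have h := hμ.2.2 ∅ ∅ (by simp)
  simp only [Set.union_empty] at h
  linarith

private lemma pq_split (hμ : IsMeasure μ) (B A : Set ℕ) :
    μ B = μ (B ∩ A) + μ (B \ A) := by
  have hd : Disjoint (B ∩ A) (B \ A) :=
    Set.disjoint_left.mpr fun x hx hx' => hx'.2 hx.2
  rw [← pq_add hμ hd, Set.inter_union_diff]

private lemma pq_mono (hμ : IsMeasure μ) {A B : Set ℕ} (h : A ⊆ B) : μ A ≤ μ B := by
  have h1 := pq_split hμ B A
  rw [Set.inter_eq_right.mpr h] at h1
  have h2 := pq_nonneg hμ (B \ A)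
  linarith

private lemma pq_diff (hμ : IsMeasure μ) {A B : Set ℕ} (h : A ⊆ B) :
    μ (B \ A) = μ B - μ A := by
  have h1 := pq_split hμ B A
  rw [Set.inter_eq_right.mpr h] at h1
  linarith

private lemma pq_compl (hμ : IsMeasure μ) (A : Set ℕ) : μ Aᶜ = 1 - μ A := by
  have h1 : μ (Set.univ \ A) = μ Set.univ - μ A := pq_diff hμ (Set.subset_univ A)
  rw [hμ.2.1] at h1
  rw [Set.compl_eq_univ_diff, h1]

private lemma pq_union_le (hμ : IsMeasure μ) (A B : Set ℕ) : μ (A ∪ B) ≤ μ A + μ B := by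
  have h1 : A ∪ B = A ∪ (B \ A) := Set.union_diff_self.symm
  have hd : Disjoint A (B \ A) := Set.disjoint_left.mpr fun x hx hx' => hx'.2 hx
  rw [h1, pq_add hμ hd]
  have := pq_mono hμ (Set.diff_subset (s := B) (t := A))
  linarith

private lemma pq_fin_union (hμ : IsMeasure μ) (hfree : IsFree μ) {A F : Set ℕ}
    (hF : F.Finite) : μ (A ∪ F) = μ A := by
  have h1 := pq_union_le hμ A F
  rw [hfree F hF] at h1
  have h2 := pq_mono hμ (Set.subset_union_left (s := A) (t := F))
  linarith

private lemma pq_biUnion_le (hμ : IsMeasure μ) (E : ℕ → Set ℕ) :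
    ∀ K : ℕ, μ (⋃ j ∈ Finset.range K, E j) ≤ ∑ j ∈ Finset.range K, μ (E j) := by
  intro K
  induction K with
  | zero => simp [pq_empty hμ]
  | succ K ih =>
    rw [Finset.range_add_one, Finset.set_biUnion_insert,
      Finset.sum_insert Finset.notMem_range_self]
    have h1 := pq_union_le hμ (E K) (⋃ j ∈ Finset.range K, E j)
    linarith

private lemma pq_biUnion_eq (hμ : IsMeasure μ) (E : ℕ → Set ℕ)
    (hd : ∀ i j, i ≠ j → Disjoint (E i) (E j)) :
    ∀ K : ℕ, μ (⋃ j ∈ Finset.range K, E j) = ∑ j ∈ Finset.range K, μ (E j) := by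
  intro K
  induction K with
  | zero => simp [pq_empty hμ]
  | succ K ih =>
    rw [Finset.range_add_one, Finset.set_biUnion_insert,
      Finset.sum_insert Finset.notMem_range_self, ← ih]
    refine pq_add hμ (Set.disjoint_left.mpr ?_)
    rintro x hx hx'
    obtain ⟨j, hj, hxj⟩ := Set.mem_iUnion₂.mp hx'
    have hjK : j < K := Finset.mem_range.mp hj
    exact Set.disjoint_left.mp (hd K j (by omega)) hx hxj

private lemma le_zero_of_le_pow {v c : ℝ} (h : ∀ K : ℕ, v ≤ c * (1/2 : ℝ) ^ K) : v ≤ 0 := by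
  rcases le_or_gt c 0 with hc | hc
  · have h0 := h 0
    simp only [pow_zero, mul_one] at h0
    linarith
  · by_contra hv
    push_neg at hv
    obtain ⟨K, hK⟩ := exists_pow_lt_of_lt_one (div_pos hv hc) (by norm_num : (1/2:ℝ) < 1)
    rw [lt_div_iff₀ hc] at hK
    have := h K
    nlinarith

/-- Pseudo-intersection lemma from the P-property. -/
private lemma pseudo_inter (hμ : IsMeasure μ) (hfree : IsFree μ) (hP : IsPMeasure μ)
    (X : ℕ → Set ℕ) (hX : ∀ m, X (m + 1) ⊆ X m) :
    ∃ S : Set ℕ, (∀ m, (S \ X m).Finite) ∧ μ S = ⨅ m, μ (X m) := by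
  have hXa : Antitone X := antitone_nat_of_succ_le hX
  set Rinf : Set ℕ := ⋂ m, X m with hRinf
  set L : ℝ := ⨅ m, μ (X m) with hL
  have hRsub : ∀ m, Rinf ⊆ X m := fun m => Set.iInter_subset X m
  set C : ℕ → Set ℕ := fun m => match m with
    | 0 => (X 0)ᶜ ∪ Rinf
    | (m+1) => X m \ X (m+1) with hCdef
  have hC0 : C 0 = (X 0)ᶜ ∪ Rinf := rfl
  have hCs : ∀ m, C (m+1) = X m \ X (m+1) := fun m => rfl
  have hCd : ∀ m k, m < k → Disjoint (C m) (C k) := by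
    intro m k hmk
    match k, hmk with
    | (k+1), hmk =>
      match m with
      | 0 =>
        rw [hC0, hCs k, Set.disjoint_union_left]
        constructor
        · exact Set.disjoint_left.mpr fun x hx hx' => hx (hXa (Nat.zero_le k) hx'.1)
        · exact Set.disjoint_left.mpr fun x hx hx' => hx'.2 (hRsub (k+1) hx)
      | (m+1) =>
        rw [hCs m, hCs k]
        refine Set.disjoint_left.mpr fun x hx hx' => ?_
        exact hx.2 (hXa (by omega : m + 1 ≤ k) hx'.1)
  have hCpair : Pairwise (Function.onFun Disjoint C) := by
    intro i j hij
    rcases hij.lt_or_gt with h | h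
    · exact hCd i j h
    · exact (hCd j i h).symm
  have hCcover : ⋃ m, C m = Set.univ := by
    classical
    ext x
    simp only [Set.mem_iUnion, Set.mem_univ, iff_true]
    by_cases h1 : x ∈ Rinf
    · exact ⟨0, Or.inr h1⟩
    · have h2 : ∃ m, x ∉ X m := by
        by_contra hc
        push_neg at hc
        exact h1 (Set.mem_iInter.mpr hc)
      by_cases h3 : x ∈ X 0
      · have hne := Nat.find_spec h2
        rcases hn : Nat.find h2 with _ | p
        · rw [hn] at hne; exact absurd h3 hne
        · refine ⟨p+1, ?_⟩
          rw [hCs p]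
          refine ⟨?_, by rw [hn] at hne; exact hne⟩
          by_contra hq
          exact (Nat.find_min h2 (by omega : p < Nat.find h2)) hq
      · exact ⟨0, Or.inl h3⟩
  obtain ⟨S₀, hS₀fin, hS₀⟩ := hP C ⟨hCpair, hCcover⟩
  -- partial sums
  have hpart : ∀ K, ∑ m ∈ Finset.range (K+1), μ (C m) = 1 + μ Rinf - μ (X K) := by
    intro K
    induction K with
    | zero =>
      rw [Finset.sum_range_one, hC0]
      have hd : Disjoint (X 0)ᶜ Rinf :=
        Set.disjoint_left.mpr fun x hx hx' => hx (hRsub 0 hx')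
      rw [pq_add hμ hd, pq_compl hμ]
      ring
    | succ K ih =>
      rw [Finset.sum_range_succ, ih, hCs K, pq_diff hμ (hX K)]
      ring
  have hbdd : BddBelow (Set.range fun m => μ (X m)) := by
    refine ⟨0, ?_⟩
    rintro y ⟨m, rfl⟩
    exact pq_nonneg hμ _
  have hmono : Antitone fun m => μ (X m) := fun i j hij => pq_mono hμ (hXa hij)
  have htendX : Tendsto (fun m => μ (X m)) atTop (nhds L) := tendsto_atTop_ciInf hmono hbdd
  have htend2 : Tendsto (fun K => ∑ m ∈ Finset.range K, μ (C m)) atTop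
      (nhds (1 + μ Rinf - L)) := by
    have h1 : Tendsto (fun K => ∑ m ∈ Finset.range (K+1), μ (C m)) atTop
        (nhds (1 + μ Rinf - L)) := by
      simp only [hpart]
      exact tendsto_const_nhds.sub htendX
    exact (tendsto_add_atTop_iff_nat 1).mp h1
  have hsummable : Summable fun m => μ (C m) := by
    refine summable_of_sum_range_le (c := 1 + μ Rinf) (fun m => pq_nonneg hμ _) (fun K => ?_)
    match K with
    | 0 =>
      simp only [Finset.range_zero, Finset.sum_empty]
      have := pq_nonneg hμ Rinf
      linarith
    | (K+1) =>
      rw [hpart K]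
      have := pq_nonneg hμ (X K)
      linarith
  have htsum : ∑' m, μ (C m) = 1 + μ Rinf - L :=
    tendsto_nhds_unique hsummable.hasSum.tendsto_sum_nat htend2
  refine ⟨S₀ ∪ Rinf, ?_, ?_⟩
  · intro m
    have hsub : (S₀ ∪ Rinf) \ X m ⊆ ⋃ k ∈ Finset.range (m+1), (S₀ ∩ C k) := by
      rintro x ⟨hx1, hx2⟩
      have hxS : x ∈ S₀ := by
        rcases hx1 with h | h
        · exact h
        · exact absurd (hRsub m h) hx2
      have hxC : ∃ k, x ∈ C k := by
        have : x ∈ ⋃ k, C k := by rw [hCcover]; trivial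
        exact Set.mem_iUnion.mp this
      obtain ⟨k, hk⟩ := hxC
      refine Set.mem_iUnion₂.mpr ⟨k, Finset.mem_range.mpr ?_, hxS, hk⟩
      match k with
      | 0 => omega
      | (p+1) =>
        rw [hCs p] at hk
        by_contra hc
        exact hx2 (hXa (by omega : m ≤ p) hk.1)
    refine Set.Finite.subset ?_ hsub
    exact Set.Finite.biUnion (Finset.range (m+1)).finite_toSet (fun k _ => hS₀fin k)
  · have h1 : (S₀ ∩ Rinf).Finite := by
      refine (hS₀fin 0).subset ?_
      rintro x ⟨hx1, hx2⟩
      exact ⟨hx1, by rw [hC0]; exact Or.inr hx2⟩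
    have hd : Disjoint S₀ (Rinf \ S₀) := Set.disjoint_left.mpr fun x hx hx' => hx'.2 hx
    have h2 : μ (S₀ ∪ Rinf) = μ S₀ + μ (Rinf \ S₀) := by
      rw [← pq_add hμ hd, Set.union_diff_self]
    have h3 : μ (Rinf \ S₀) = μ Rinf := by
      have h4 := pq_split hμ Rinf S₀
      have h5 : μ (Rinf ∩ S₀) = 0 := hfree _ (h1.subset (fun x hx => ⟨hx.2, hx.1⟩))
      linarith
    rw [h2, h3, hS₀, htsum]
    ring

-- ### Hull machinery over a partition

private def sHull (A : ℕ → Set ℕ) (J : Set ℕ) : Set ℕ := ⋃ n ∈ J, A n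

private lemma mem_sHull (A : ℕ → Set ℕ) (J : Set ℕ) (x : ℕ) :
    x ∈ sHull A J ↔ ∃ n ∈ J, x ∈ A n := by
  simp [sHull]

private lemma sHull_mono (A : ℕ → Set ℕ) {J K : Set ℕ} (h : J ⊆ K) :
    sHull A J ⊆ sHull A K := by
  intro x hx
  obtain ⟨n, hn, hxn⟩ := (mem_sHull A J x).mp hx
  exact (mem_sHull A K x).mpr ⟨n, h hn, hxn⟩

private lemma sHull_union (A : ℕ → Set ℕ) (J K : Set ℕ) :
    sHull A (J ∪ K) = sHull A J ∪ sHull A K := by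
  ext x
  simp only [mem_sHull, Set.mem_union]
  constructor
  · rintro ⟨n, h | h, hx⟩
    · exact Or.inl ⟨n, h, hx⟩
    · exact Or.inr ⟨n, h, hx⟩
  · rintro (⟨n, h, hx⟩ | ⟨n, h, hx⟩)
    · exact ⟨n, Or.inl h, hx⟩
    · exact ⟨n, Or.inr h, hx⟩

private lemma sHull_finite {A : ℕ → Set ℕ} (hfin : ∀ n, (A n).Finite) {J : Set ℕ}
    (hJ : J.Finite) : (sHull A J).Finite := hJ.biUnion (fun n _ => hfin n)

private lemma sHull_compl (A : ℕ → Set ℕ) (hA : IsPartition A) (J : Set ℕ) :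
    sHull A Jᶜ = (sHull A J)ᶜ := by
  ext x
  simp only [Set.mem_compl_iff]
  constructor
  · intro hx hx'
    obtain ⟨n, hn, hxn⟩ := (mem_sHull _ _ _).mp hx
    obtain ⟨m, hm, hxm⟩ := (mem_sHull _ _ _).mp hx'
    have hmn : m = n := by
      by_contra h
      exact Set.disjoint_left.mp (hA.1 h) hxm hxn
    exact hn (hmn ▸ hm)
  · intro hx
    have hxu : x ∈ ⋃ n, A n := by rw [hA.2]; trivial
    obtain ⟨n, hn⟩ := Set.mem_iUnion.mp hxu
    refine (mem_sHull _ _ _).mpr ⟨n, fun hmem => ?_, hn⟩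
    exact hx ((mem_sHull _ _ _).mpr ⟨n, hmem, hn⟩)

private def jset (A : ℕ → Set ℕ) (S : Set ℕ) : Set ℕ := {n | (S ∩ A n).Nonempty}

private lemma subset_sHull_jset (A : ℕ → Set ℕ) (hA : IsPartition A) (S : Set ℕ) :
    S ⊆ sHull A (jset A S) := by
  intro x hx
  have hxu : x ∈ ⋃ n, A n := by rw [hA.2]; trivial
  obtain ⟨n, hn⟩ := Set.mem_iUnion.mp hxu
  exact (mem_sHull _ _ _).mpr ⟨n, ⟨x, hx, hn⟩, hn⟩

private lemma jset_diff_finite (A : ℕ → Set ℕ) (hA : IsPartition A) {S K : Set ℕ}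
    (h : (S \ sHull A K).Finite) : (jset A S \ K).Finite := by
  have hex : ∀ x : ℕ, ∃ n, x ∈ A n := fun x => Set.mem_iUnion.mp (by rw [hA.2]; trivial)
  choose idx hidx using hex
  refine (h.image idx).subset ?_
  rintro n ⟨hn, hnK⟩
  obtain ⟨x, hxS, hxA⟩ := hn
  have h1 : x ∉ sHull A K := by
    intro hx
    obtain ⟨m, hm, hxm⟩ := (mem_sHull _ _ _).mp hx
    have hmn : m = n := by
      by_contra hne
      exact Set.disjoint_left.mp (hA.1 hne) hxm hxA
    exact hnK (hmn ▸ hm)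
  have h2 : idx x = n := by
    by_contra hne
    exact Set.disjoint_left.mp (hA.1 hne) (hidx x) hxA
  exact ⟨x, ⟨hxS, h1⟩, h2⟩

private lemma pq_hull_split (hμ : IsMeasure μ) (A : ℕ → Set ℕ) (hA : IsPartition A)
    (D J : Set ℕ) :
    μ (D ∩ sHull A J) + μ (D ∩ sHull A Jᶜ) = μ D := by
  rw [sHull_compl A hA]
  rw [← pq_add hμ (disjoint_compl_right.mono Set.inter_subset_right Set.inter_subset_right),
    Set.inter_union_compl]

/-- Exact separation: if `D` can be approximately separated by invariant hulls,
it can be exactly separated.  Uses the P-property twice. -/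
private lemma pq_pair_sep (hμ : IsMeasure μ) (hfree : IsFree μ) (hP : IsPMeasure μ)
    (A : ℕ → Set ℕ) (hA : IsPartition A) (hfin : ∀ n, (A n).Finite) (D : Set ℕ)
    (happ : ∀ ε : ℝ, 0 < ε → ∃ J : Set ℕ, μ (D ∩ sHull A Jᶜ) < ε ∧ μ (sHull A J \ D) < ε) :
    ∃ J : Set ℕ, μ (D ∩ sHull A Jᶜ) = 0 ∧ μ (sHull A J \ D) = 0 := by
  have hhalf : ∀ i : ℕ, (0:ℝ) < (1/2)^i := fun i => by positivity
  choose Js hJ1 hJ2 using fun i : ℕ => happ ((1/2)^i) (hhalf i)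
  -- Step A: for every m a set Jstar with exact hull-escape 0 and small complement mass
  have hstep : ∀ m : ℕ, ∃ Jm : Set ℕ, μ (sHull A Jm \ D) = 0 ∧
      μ (D ∩ sHull A Jmᶜ) ≤ 2 * (1/2)^m := by
    intro m
    set Kf : ℕ → Set ℕ := fun M => ⋂ i ∈ Finset.range (M+1), Js (m+i) with hKf
    have hKmem : ∀ M x, x ∈ Kf M ↔ ∀ i < M + 1, x ∈ Js (m+i) := by
      intro M x
      simp [hKf, Finset.mem_range]
    have hKdec : ∀ M, Kf (M+1) ⊆ Kf M := by
      intro M x hx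
      rw [hKmem] at hx ⊢
      exact fun i hi => hx i (by omega)
    have hKsub : ∀ M, Kf M ⊆ Js (m+M) := by
      intro M x hx
      rw [hKmem] at hx
      exact hx M (by omega)
    obtain ⟨S, hSfin, hSμ⟩ := pseudo_inter hμ hfree hP (fun M => sHull A (Kf M))
      (fun M => sHull_mono A (hKdec M))
    set Jm := jset A S with hJm
    have hfinm : ∀ M, (Jm \ Kf M).Finite := fun M => jset_diff_finite A hA (hSfin M)
    have hβ : μ (sHull A Jm \ D) = 0 := by
      have hb : ∀ M : ℕ, μ (sHull A Jm \ D) ≤ 1 * (1/2)^M := by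
        intro M
        have h1 : Jm ⊆ Kf M ∪ (Jm \ Kf M) := by
          intro x hx
          by_cases h : x ∈ Kf M
          · exact Or.inl h
          · exact Or.inr ⟨hx, h⟩
        have h2 : sHull A Jm \ D ⊆ (sHull A (Kf M) \ D) ∪ sHull A (Jm \ Kf M) := by
          intro x hx
          have hx1 := (sHull_mono A h1) hx.1
          rw [sHull_union] at hx1
          rcases hx1 with h | h
          · exact Or.inl ⟨h, hx.2⟩
          · exact Or.inr h
        have h3 := pq_mono hμ h2
        have h4 := pq_union_le hμ (sHull A (Kf M) \ D) (sHull A (Jm \ Kf M))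
        have h5 : μ (sHull A (Jm \ Kf M)) = 0 := hfree _ (sHull_finite hfin (hfinm M))
        have h6 : μ (sHull A (Kf M) \ D) ≤ μ (sHull A (Js (m+M)) \ D) :=
          pq_mono hμ (Set.diff_subset_diff_left (sHull_mono A (hKsub M)))
        have h7 := le_of_lt (hJ2 (m+M))
        have h8 : (1/2:ℝ)^(m+M) ≤ (1/2)^M :=
          pow_le_pow_of_le_one (by norm_num) (by norm_num) (Nat.le_add_left M m)
        rw [one_mul]
        linarith
      exact le_antisymm (le_zero_of_le_pow hb) (pq_nonneg hμ _)
    have hαKf : ∀ M : ℕ, μ (D ∩ sHull A (Kf M)ᶜ) ≤ 2 * (1/2)^m := by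
      intro M
      have h2 : D ∩ sHull A (Kf M)ᶜ ⊆
          ⋃ i ∈ Finset.range (M+1), (D ∩ sHull A ((Js (m+i))ᶜ)) := by
        intro x hx
        obtain ⟨n, hn, hxn⟩ := (mem_sHull _ _ _).mp hx.2
        have hn' : ∃ i < M + 1, n ∉ Js (m+i) := by
          by_contra hc
          push_neg at hc
          exact hn ((hKmem M n).mpr hc)
        obtain ⟨i, hi, hni⟩ := hn'
        exact Set.mem_iUnion₂.mpr ⟨i, Finset.mem_range.mpr hi,
          ⟨hx.1, (mem_sHull _ _ _).mpr ⟨n, hni, hxn⟩⟩⟩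
      have h3 := pq_mono hμ h2
      have h4 := pq_biUnion_le hμ (fun i => D ∩ sHull A ((Js (m+i))ᶜ)) (M+1)
      have h5 : ∑ i ∈ Finset.range (M+1), μ (D ∩ sHull A ((Js (m+i))ᶜ))
          ≤ ∑ i ∈ Finset.range (M+1), (1/2:ℝ)^(m+i) :=
        Finset.sum_le_sum (fun i _ => le_of_lt (hJ1 (m+i)))
      have h6 : ∑ i ∈ Finset.range (M+1), (1/2:ℝ)^(m+i)
          = (1/2:ℝ)^m * ∑ i ∈ Finset.range (M+1), (1/2:ℝ)^i := by
        rw [Finset.mul_sum]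
        exact Finset.sum_congr rfl (fun i _ => pow_add (1/2:ℝ) m i)
      have h7 : (1/2:ℝ)^m * ∑ i ∈ Finset.range (M+1), (1/2:ℝ)^i ≤ (1/2:ℝ)^m * 2 :=
        mul_le_mul_of_nonneg_left (sum_geometric_two_le (M+1)) (le_of_lt (hhalf m))
      calc μ (D ∩ sHull A (Kf M)ᶜ)
          ≤ ∑ i ∈ Finset.range (M+1), μ (D ∩ sHull A ((Js (m+i))ᶜ)) := le_trans h3 h4
        _ ≤ 2 * (1/2)^m := by linarith
    have hSlb : μ D - 2*(1/2)^m ≤ μ S := by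
      rw [hSμ]
      refine le_ciInf fun M => ?_
      have h1 := pq_hull_split hμ A hA D (Kf M)
      have h2 : μ (D ∩ sHull A (Kf M)) ≤ μ (sHull A (Kf M)) :=
        pq_mono hμ Set.inter_subset_right
      have h3 := hαKf M
      linarith
    have hSub : μ S ≤ μ (sHull A Jm) := pq_mono hμ (subset_sHull_jset A hA S)
    have hαJm : μ (D ∩ sHull A Jm) = μ (sHull A Jm) - μ (sHull A Jm \ D) := by
      have h1 := pq_split hμ (sHull A Jm) D
      rw [Set.inter_comm (sHull A Jm) D] at h1
      linarith
    refine ⟨Jm, hβ, ?_⟩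
    have h1 := pq_hull_split hμ A hA D Jm
    linarith
  choose Jstar hJstarβ hJstarα using hstep
  set L : ℕ → Set ℕ := fun m => ⋃ i ∈ Finset.range (m+1), Jstar i with hLdef
  have hJsubL : ∀ m, Jstar m ⊆ L m :=
    fun m => Set.subset_biUnion_of_mem (by simp : m ∈ (Finset.range (m+1) : Set ℕ))
  have hLmono : ∀ m, L m ⊆ L (m+1) := by
    intro m x hx
    obtain ⟨i, hi, hxi⟩ := Set.mem_iUnion₂.mp hx
    exact Set.mem_iUnion₂.mpr ⟨i, by simp at hi ⊢; omega, hxi⟩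
  have hLβ : ∀ m, μ (sHull A (L m) \ D) = 0 := by
    intro m
    induction m with
    | zero =>
      have h0 : L 0 = Jstar 0 := by
        simp [hLdef]
      rw [h0]
      exact hJstarβ 0
    | succ m ih =>
      have h1 : L (m+1) = Jstar (m+1) ∪ L m := by
        show (⋃ i ∈ Finset.range (m+1+1), Jstar i)
            = Jstar (m+1) ∪ ⋃ i ∈ Finset.range (m+1), Jstar i
        rw [Finset.range_add_one, Finset.set_biUnion_insert]
      have h2 : sHull A (L (m+1)) \ D ⊆
          (sHull A (Jstar (m+1)) \ D) ∪ (sHull A (L m) \ D) := by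
        rw [h1, sHull_union]
        rintro x ⟨hx1, hx2⟩
        rcases hx1 with h | h
        · exact Or.inl ⟨h, hx2⟩
        · exact Or.inr ⟨h, hx2⟩
      have h3 := le_trans (pq_mono hμ h2)
        (pq_union_le hμ (sHull A (Jstar (m+1)) \ D) (sHull A (L m) \ D))
      rw [hJstarβ (m+1), ih] at h3
      have h4 := pq_nonneg hμ (sHull A (L (m+1)) \ D)
      linarith
  have hLα : ∀ m, μ (D ∩ sHull A (L m)ᶜ) ≤ 2 * (1/2)^m := by
    intro m
    refine le_trans (pq_mono hμ ?_) (hJstarα m)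
    exact Set.inter_subset_inter_right D (sHull_mono A (Set.compl_subset_compl.mpr (hJsubL m)))
  have hYdec : ∀ m, sHull A ((L (m+1))ᶜ) ⊆ sHull A ((L m)ᶜ) :=
    fun m => sHull_mono A (Set.compl_subset_compl.mpr (hLmono m))
  obtain ⟨S', hS'fin, hS'μ⟩ := pseudo_inter hμ hfree hP (fun m => sHull A ((L m)ᶜ)) hYdec
  have hYval : ∀ m, μ (sHull A ((L m)ᶜ))
      = 1 - μ (D ∩ sHull A (L m)) - μ (sHull A (L m) \ D) := by
    intro m
    rw [sHull_compl A hA, pq_compl hμ]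
    have h1 := pq_split hμ (sHull A (L m)) D
    rw [Set.inter_comm (sHull A (L m)) D] at h1
    linarith
  have hbddY : BddBelow (Set.range fun m => μ (sHull A ((L m)ᶜ))) := by
    refine ⟨0, ?_⟩
    rintro y ⟨m, rfl⟩
    exact pq_nonneg hμ _
  have hS'val : μ S' = 1 - μ D := by
    rw [hS'μ]
    apply le_antisymm
    · have h1 : (⨅ M, μ (sHull A ((L M)ᶜ))) - (1 - μ D) ≤ 0 := by
        refine le_zero_of_le_pow (c := 2) fun K => ?_
        have hc := ciInf_le hbddY K
        have h2 := hYval K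
        have h3 := hLβ K
        have h4 := pq_hull_split hμ A hA D (L K)
        have h5 := hLα K
        linarith
      linarith
    · refine le_ciInf fun m => ?_
      have h2 := hYval m
      have h3 := hLβ m
      have h4 : μ (D ∩ sHull A (L m)) ≤ μ D := pq_mono hμ Set.inter_subset_left
      linarith
  set P2 := jset A S' with hP2
  have hP2fin : ∀ m, (P2 \ (L m)ᶜ).Finite := fun m => jset_diff_finite A hA (hS'fin m)
  have hαP2 : μ (D ∩ sHull A P2) = 0 := by
    have hb : ∀ m : ℕ, μ (D ∩ sHull A P2) ≤ 2*(1/2)^m := by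
      intro m
      have h1 : P2 ⊆ (L m)ᶜ ∪ (P2 \ (L m)ᶜ) := by
        intro x hx
        by_cases h : x ∈ (L m)ᶜ
        · exact Or.inl h
        · exact Or.inr ⟨hx, h⟩
      have h2 : D ∩ sHull A P2 ⊆ (D ∩ sHull A ((L m)ᶜ)) ∪ sHull A (P2 \ (L m)ᶜ) := by
        intro x hx
        have hx1 := (sHull_mono A h1) hx.2
        rw [sHull_union] at hx1
        rcases hx1 with h | h
        · exact Or.inl ⟨hx.1, h⟩
        · exact Or.inr h
      have h3 := pq_mono hμ h2
      have h4 := pq_union_le hμ (D ∩ sHull A ((L m)ᶜ)) (sHull A (P2 \ (L m)ᶜ))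
      have h5 : μ (sHull A (P2 \ (L m)ᶜ)) = 0 := hfree _ (sHull_finite hfin (hP2fin m))
      have h6 := hLα m
      linarith
    exact le_antisymm (le_zero_of_le_pow hb) (pq_nonneg hμ _)
  refine ⟨P2ᶜ, ?_, ?_⟩
  · rw [compl_compl]
    exact hαP2
  · have h2 : μ S' ≤ μ (sHull A P2) := pq_mono hμ (subset_sHull_jset A hA S')
    have h3 := pq_hull_split hμ A hA D P2ᶜ
    rw [compl_compl] at h3
    have h4 := pq_split hμ (sHull A P2ᶜ) D
    rw [Set.inter_comm (sHull A P2ᶜ) D] at h4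
    have h5 : μ (sHull A P2ᶜ) = 1 - μ (sHull A P2) := by
      rw [sHull_compl A hA, pq_compl hμ]
    have h6 := pq_nonneg hμ (sHull A P2ᶜ \ D)
    have h7 := hS'val
    apply le_antisymm ?_ h6
    linarith

end PQAux

/-- Every P-measure which is an almost Q-measure is a Q-measure. -/
theorem stmt_17 (μ : Set ℕ → ℝ) (hμ : IsMeasure μ) (hfree : IsFree μ)
    (hP : IsPMeasure μ) (hAQ : IsAlmostQMeasure μ) : IsQMeasure μ := by
  intro A hA hfinA
  have hhalf : ∀ i : ℕ, (0:ℝ) < (1/2)^i := fun i => by positivity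
  have hex : ∀ x : ℕ, ∃ n, x ∈ A n := fun x => Set.mem_iUnion.mp (by rw [hA.2]; trivial)
  -- selectors of measure close to 1
  obtain ⟨Ts, hTsel, hTμ⟩ : ∃ Ts : ℕ → Set ℕ, (∀ k, IsSelector (Ts k) A) ∧
      ∀ k, 1 - (1/2:ℝ)^k < μ (Ts k) := by
    choose Ts h1 h2 using fun k : ℕ =>
      hAQ A hA hfinA (1 - (1/2:ℝ)^k) (by have := hhalf k; linarith)
    exact ⟨Ts, h1, h2⟩
  -- layer construction
  set Rk : ℕ → Set ℕ := fun k => Nat.rec Set.univ (fun k R => R \ Ts k) k with hRkdef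
  have hRk0 : Rk 0 = Set.univ := rfl
  have hRks : ∀ k, Rk (k+1) = Rk k \ Ts k := fun k => rfl
  set Dk : ℕ → Set ℕ := fun k => Ts k ∩ Rk k with hDkdef
  have hDk : ∀ k, Dk k = Ts k ∩ Rk k := fun k => rfl
  have hRanti : ∀ i j, i ≤ j → Rk j ⊆ Rk i := by
    intro i j hij
    induction j with
    | zero =>
      have : i = 0 := by omega
      rw [this]
    | succ j ihj =>
      rcases Nat.lt_or_ge i (j+1) with h | h
      · refine subset_trans ?_ (ihj (by omega))
        rw [hRks j]
        exact Set.diff_subset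
      · have : i = j + 1 := by omega
        rw [this]
  have hRμ : ∀ k, μ (Rk (k+1)) ≤ (1/2:ℝ)^k := by
    intro k
    have h1 : Rk (k+1) ⊆ (Ts k)ᶜ := by
      rw [hRks k]
      intro x hx
      exact hx.2
    have h2 := pq_mono hμ h1
    rw [pq_compl hμ] at h2
    have := hTμ k
    linarith
  have hDlt : ∀ j k, j < k → Disjoint (Dk j) (Dk k) := by
    intro j k hjk
    refine Set.disjoint_left.mpr fun x hxj hxk => ?_
    have h1 : x ∈ Rk (j+1) := hRanti (j+1) k (by omega) hxk.2
    rw [hRks j] at h1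
    exact h1.2 hxj.1
  have hDne : ∀ j k, j ≠ k → Disjoint (Dk j) (Dk k) := fun j k h =>
    h.lt_or_gt.elim (hDlt j k) (fun h' => (hDlt k j h').symm)
  have hsplitk : ∀ k, μ (Rk k) = μ (Dk k) + μ (Rk (k+1)) := by
    intro k
    have h1 := pq_split hμ (Rk k) (Ts k)
    rw [Set.inter_comm (Rk k) (Ts k)] at h1
    rw [hRks k, hDk k]
    exact h1
  have hsumD : ∀ K, ∑ j ∈ Finset.range (K+1), μ (Dk j) = 1 - μ (Rk (K+1)) := by
    intro K
    induction K with
    | zero =>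
      rw [Finset.sum_range_one]
      have h1 := hsplitk 0
      rw [hRk0, hμ.2.1] at h1
      linarith
    | succ K ih =>
      rw [Finset.sum_range_succ, ih]
      have h1 := hsplitk (K+1)
      linarith
  have hcoverD : ∀ K, (⋃ j ∈ Finset.range (K+1), Dk j) ∪ Rk (K+1) = Set.univ := by
    intro K
    induction K with
    | zero =>
      have h0 : (⋃ j ∈ Finset.range 1, Dk j) = Dk 0 := by simp
      rw [h0, hRks 0, hDk 0, hRk0]
      ext x
      simp only [Set.mem_union, Set.mem_inter_iff, Set.mem_diff, Set.mem_univ, iff_true]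
      by_cases hx : x ∈ Ts 0
      · exact Or.inl ⟨hx, trivial⟩
      · exact Or.inr ⟨trivial, hx⟩
    | succ K ih =>
      have h1 : Dk (K+1) ∪ Rk (K+2) = Rk (K+1) := by
        rw [hRks (K+1), hDk (K+1)]
        ext x
        constructor
        · rintro (h | h)
          · exact h.2
          · exact h.1
        · intro h
          by_cases hx : x ∈ Ts (K+1)
          · exact Or.inl ⟨hx, h⟩
          · exact Or.inr ⟨h, hx⟩
      have h2 : (⋃ j ∈ Finset.range (K+2), Dk j)
          = Dk (K+1) ∪ ⋃ j ∈ Finset.range (K+1), Dk j := by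
        rw [Finset.range_add_one, Finset.set_biUnion_insert]
      rw [h2, Set.union_comm (Dk (K+1)), Set.union_assoc, h1, ih]
  -- approximate separation for each layer
  have happrox : ∀ k : ℕ, ∀ ε : ℝ, 0 < ε →
      ∃ J : Set ℕ, μ (Dk k ∩ sHull A Jᶜ) < ε ∧ μ (sHull A J \ Dk k) < ε := by
    intro k ε hε
    obtain ⟨K0, hK0⟩ := exists_pow_lt_of_lt_one (show (0:ℝ) < ε/4 by linarith)
      (by norm_num : (1/2:ℝ) < 1)
    set K := max k K0 with hK
    have hKk : k ≤ K := le_max_left _ _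
    have hKpow : (1/2:ℝ)^K ≤ (1/2)^K0 :=
      pow_le_pow_of_le_one (by norm_num) (by norm_num) (le_max_right _ _)
    have hKε : μ (Rk (K+1)) < ε/4 := lt_of_le_of_lt (le_trans (hRμ K) hKpow) hK0
    obtain ⟨T', hT'sel, hT'μ⟩ := hAQ A hA hfinA (1 - ε/4) (by linarith)
    set I' : ℕ → Set ℕ := fun j => {n | (T' ∩ A n ∩ Dk j).Nonempty} with hI'
    have hI'disj : ∀ j j', j ≠ j' → Disjoint (I' j) (I' j') := by
      intro j j' hjj'
      rw [Set.disjoint_left]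
      rintro n ⟨x, hx⟩ ⟨y, hy⟩
      have hxy : x = y := hT'sel n hx.1 hy.1
      subst hxy
      exact Set.disjoint_left.mp (hDne j j' hjj') hx.2 hy.2
    have hsubhull : ∀ j, T' ∩ Dk j ⊆ Dk j ∩ sHull A (I' j) := by
      intro j x hx
      obtain ⟨n, hn⟩ := hex x
      exact ⟨hx.2, (mem_sHull _ _ _).mpr ⟨n, ⟨x, ⟨hx.1, hn⟩, hx.2⟩, hn⟩⟩
    have hμT'sum : 1 - ε/2 < ∑ j ∈ Finset.range (K+1), μ (T' ∩ Dk j) := by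
      have h1 : T' ⊆ (⋃ j ∈ Finset.range (K+1), (T' ∩ Dk j)) ∪ (T' ∩ Rk (K+1)) := by
        intro x hx
        have hxu : x ∈ (⋃ j ∈ Finset.range (K+1), Dk j) ∪ Rk (K+1) := by
          rw [hcoverD K]; trivial
        rcases hxu with h | h
        · obtain ⟨j, hj, hxj⟩ := Set.mem_iUnion₂.mp h
          exact Or.inl (Set.mem_iUnion₂.mpr ⟨j, hj, hx, hxj⟩)
        · exact Or.inr ⟨hx, h⟩
      have h2 := pq_mono hμ h1
      have h3 := pq_union_le hμ (⋃ j ∈ Finset.range (K+1), (T' ∩ Dk j)) (T' ∩ Rk (K+1))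
      have h4 := pq_biUnion_eq hμ (fun j => T' ∩ Dk j)
        (fun i j hij => (hDne i j hij).mono Set.inter_subset_right Set.inter_subset_right)
        (K+1)
      have h5 : μ (T' ∩ Rk (K+1)) ≤ μ (Rk (K+1)) := pq_mono hμ Set.inter_subset_right
      linarith
    have hkey : ∑ j ∈ Finset.range (K+1), (μ (Dk j) - μ (Dk j ∩ sHull A (I' j))) ≤ ε/2 := by
      have h3 : ∑ j ∈ Finset.range (K+1), μ (T' ∩ Dk j)
          ≤ ∑ j ∈ Finset.range (K+1), μ (Dk j ∩ sHull A (I' j)) :=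
        Finset.sum_le_sum (fun j _ => pq_mono hμ (hsubhull j))
      have h4 := hsumD K
      have h5 := pq_nonneg hμ (Rk (K+1))
      rw [Finset.sum_sub_distrib, h4]
      linarith
    refine ⟨I' k, ?_, ?_⟩
    · have h1 : μ (Dk k) - μ (Dk k ∩ sHull A (I' k)) ≤ ε/2 := by
        refine le_trans (Finset.single_le_sum
          (f := fun j => μ (Dk j) - μ (Dk j ∩ sHull A (I' j))) ?_
          (Finset.mem_range.mpr (by omega))) hkey
        intro j _
        show (0:ℝ) ≤ μ (Dk j) - μ (Dk j ∩ sHull A (I' j))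
        have := pq_mono hμ (Set.inter_subset_left (s := Dk j) (t := sHull A (I' j)))
        linarith
      have h2 := pq_hull_split hμ A hA (Dk k) (I' k)
      linarith
    · have hsub2 : sHull A (I' k) \ Dk k ⊆
          (⋃ j ∈ Finset.range (K+1),
            (if j = k then (∅ : Set ℕ) else Dk j ∩ sHull A (I' k))) ∪ Rk (K+1) := by
        intro x hx
        have hxu : x ∈ (⋃ j ∈ Finset.range (K+1), Dk j) ∪ Rk (K+1) := by
          rw [hcoverD K]; trivial
        rcases hxu with h | h
        · obtain ⟨j, hj, hxj⟩ := Set.mem_iUnion₂.mp h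
          refine Or.inl (Set.mem_iUnion₂.mpr ⟨j, hj, ?_⟩)
          have hjk : j ≠ k := fun h' => hx.2 (h' ▸ hxj)
          rw [if_neg hjk]
          exact ⟨hxj, hx.1⟩
        · exact Or.inr h
      have hbound : ∀ j ∈ Finset.range (K+1),
          μ (if j = k then (∅ : Set ℕ) else Dk j ∩ sHull A (I' k))
            ≤ μ (Dk j) - μ (Dk j ∩ sHull A (I' j)) := by
        intro j _
        by_cases hjk : j = k
        · rw [if_pos hjk, pq_empty hμ]
          have := pq_mono hμ (Set.inter_subset_left (s := Dk j) (t := sHull A (I' j)))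
          linarith
        · rw [if_neg hjk]
          have hsub3 : Dk j ∩ sHull A (I' k) ⊆ Dk j ∩ sHull A (I' j)ᶜ := by
            refine Set.inter_subset_inter_right _ (sHull_mono A ?_)
            intro n hn
            simp only [Set.mem_compl_iff]
            exact fun hmem => Set.disjoint_left.mp (hI'disj j k hjk) hmem hn
          have h4 := pq_hull_split hμ A hA (Dk j) (I' j)
          have h5 := pq_mono hμ hsub3
          linarith
      have hc1 := pq_mono hμ hsub2
      have hc2 := pq_union_le hμ
        (⋃ j ∈ Finset.range (K+1),
          (if j = k then (∅ : Set ℕ) else Dk j ∩ sHull A (I' k))) (Rk (K+1))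
      have hc3 := pq_biUnion_le hμ
        (fun j => if j = k then (∅ : Set ℕ) else Dk j ∩ sHull A (I' k)) (K+1)
      have hc4 := Finset.sum_le_sum hbound
      linarith
  -- exact separation for each layer
  choose Jk hJk1 hJk2 using fun k => pq_pair_sep hμ hfree hP A hA hfinA (Dk k) (happrox k)
  set I : ℕ → Set ℕ := fun k => Jk k \ ⋃ j ∈ Finset.range k, Jk j with hIdef
  set T : Set ℕ := ⋃ k, (Dk k ∩ sHull A (I k)) with hTdef
  have hIdisjlt : ∀ j k, j < k → Disjoint (I j) (I k) := by
    intro j k hjk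
    refine Set.disjoint_left.mpr fun n hnj hnk => ?_
    exact hnk.2 (Set.mem_iUnion₂.mpr ⟨j, Finset.mem_range.mpr hjk, hnj.1⟩)
  have hIdisj : ∀ j k, j ≠ k → Disjoint (I j) (I k) := fun j k h =>
    h.lt_or_gt.elim (hIdisjlt j k) (fun h' => (hIdisjlt k j h').symm)
  have huniq : ∀ {x : ℕ} {m n : ℕ}, x ∈ A m → x ∈ A n → m = n := by
    intro x m n h1 h2
    by_contra h
    exact Set.disjoint_left.mp (hA.1 h) h1 h2
  have hTsel2 : IsSelector T A := by
    intro n x hx y hy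
    obtain ⟨hxT, hxA⟩ := hx
    obtain ⟨hyT, hyA⟩ := hy
    obtain ⟨j, hxD, hxH⟩ := Set.mem_iUnion.mp hxT
    obtain ⟨j', hyD, hyH⟩ := Set.mem_iUnion.mp hyT
    have hnj : n ∈ I j := by
      obtain ⟨m, hm, hxm⟩ := (mem_sHull _ _ _).mp hxH
      exact (huniq hxm hxA) ▸ hm
    have hnj' : n ∈ I j' := by
      obtain ⟨m, hm, hym⟩ := (mem_sHull _ _ _).mp hyH
      exact (huniq hym hyA) ▸ hm
    have hjj : j = j' := by
      by_contra h
      exact Set.disjoint_left.mp (hIdisj j j' h) hnj hnj'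
    subst hjj
    exact hTsel j n ⟨hxD.1, hxA⟩ ⟨hyD.1, hyA⟩
  have hDfull : ∀ k, μ (Dk k ∩ sHull A (I k)) = μ (Dk k) := by
    intro k
    have hsplit2 := pq_split hμ (Dk k) (sHull A (I k))
    have hzero : μ (Dk k \ sHull A (I k)) = 0 := by
      have hsub : Dk k \ sHull A (I k) ⊆
          (Dk k ∩ sHull A (Jk k)ᶜ) ∪ ⋃ j ∈ Finset.range k, (sHull A (Jk j) \ Dk j) := by
        rintro x ⟨hx1, hx2⟩
        obtain ⟨n, hn⟩ := hex x
        by_cases hnI : n ∈ I k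
        · exact absurd ((mem_sHull _ _ _).mpr ⟨n, hnI, hn⟩) hx2
        · by_cases hnJ : n ∈ Jk k
          · have hnU : n ∈ ⋃ j ∈ Finset.range k, Jk j := by
              by_contra hc
              exact hnI ⟨hnJ, hc⟩
            obtain ⟨j, hj, hnjj⟩ := Set.mem_iUnion₂.mp hnU
            refine Or.inr (Set.mem_iUnion₂.mpr ⟨j, hj,
              (mem_sHull _ _ _).mpr ⟨n, hnjj, hn⟩, ?_⟩)
            intro hxj
            exact Set.disjoint_left.mp (hDne j k (by
              have := Finset.mem_range.mp hj; omega)) hxj hx1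
          · exact Or.inl ⟨hx1, (mem_sHull _ _ _).mpr ⟨n, hnJ, hn⟩⟩
      have h1 := pq_mono hμ hsub
      have h2 := pq_union_le hμ (Dk k ∩ sHull A (Jk k)ᶜ)
        (⋃ j ∈ Finset.range k, (sHull A (Jk j) \ Dk j))
      have h3 := pq_biUnion_le hμ (fun j => sHull A (Jk j) \ Dk j) k
      have h4 : ∑ j ∈ Finset.range k, μ (sHull A (Jk j) \ Dk j) = 0 :=
        Finset.sum_eq_zero fun j _ => hJk2 j
      have h5 := pq_nonneg hμ (Dk k \ sHull A (I k))
      have h6 := hJk1 k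
      linarith
    linarith
  have hTlow : ∀ K : ℕ, 1 - μ T ≤ 1 * (1/2:ℝ)^K := by
    intro K
    have h1 : (⋃ j ∈ Finset.range (K+1), (Dk j ∩ sHull A (I j))) ⊆ T := by
      intro x hx
      obtain ⟨j, _, hxj⟩ := Set.mem_iUnion₂.mp hx
      exact Set.mem_iUnion.mpr ⟨j, hxj⟩
    have h2 := pq_biUnion_eq hμ (fun j => Dk j ∩ sHull A (I j))
      (fun i j hij => (hDne i j hij).mono Set.inter_subset_left Set.inter_subset_left) (K+1)
    have h3 : ∑ j ∈ Finset.range (K+1), μ (Dk j ∩ sHull A (I j))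
        = ∑ j ∈ Finset.range (K+1), μ (Dk j) :=
      Finset.sum_congr rfl fun j _ => hDfull j
    have h4 := hsumD K
    have h5 := pq_mono hμ h1
    have h6 := hRμ K
    rw [one_mul]
    linarith
  have hT1 : μ T = 1 := by
    have h1 : 1 - μ T ≤ 0 := le_zero_of_le_pow hTlow
    have h2 := (hμ.1 T).2
    linarith
  exact ⟨T, hTsel2, hT1⟩
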